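/- Probability that a ball around a random point is empty: if X, X_1, ..., X_N are i.i.d. ∼ ρ_X on a compact set X ⊆ [0,1]^d, then P(no X_i lies in B_h(X)) ≤ E[(1 - ρ_X(B_h(X)))^N] ≤ c/(N h^d) for a constant c depending only on d. -/

import Mathlib

open MeasureTheory Metric ENNReal

lemma stmt19_aux_real {N : ℕ} (hN : 0 < N) {q : ℝ} (h0 : 0 ≤ q) (h1 : q ≤ 1) :
    (1 - q) ^ N * q ≤ 1 / N := by
  rcases eq_or_lt_of_le h0 with rfl | hq
  · simp
  · have h2 : (1 - q : ℝ) ≤ Real.exp (-q) := by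
      have := Real.add_one_le_exp (-q); linarith
    have h3 : (1 - q) ^ N ≤ Real.exp (-q) ^ N := pow_le_pow_left₀ (by linarith) h2 N
    have h4 : Real.exp (-q) ^ N = Real.exp (-(N * q)) := by
      rw [← Real.exp_nat_mul]; ring_nf
    have h5 : (N : ℝ) * q ≤ Real.exp (N * q) := by
      have := Real.add_one_le_exp ((N : ℝ) * q); linarith
    have hNq : (0:ℝ) < N * q := by positivity
    have h6 : Real.exp (-(N * q)) ≤ 1 / (N * q) := by
      rw [Real.exp_neg, one_div, inv_le_inv₀ (Real.exp_pos _) hNq]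
      exact h5
    calc (1 - q) ^ N * q ≤ (1 / (N * q)) * q :=
          mul_le_mul_of_nonneg_right (h3.trans (h4 ▸ h6)) h0
      _ = 1 / N := by field_simp

lemma stmt19_aux_enn {N : ℕ} (hN : 0 < N) {p : ℝ≥0∞} (hp : p ≤ 1) :
    (1 - p) ^ N * p ≤ ENNReal.ofReal (1 / N) := by
  have hpt : p ≠ ⊤ := (hp.trans_lt ENNReal.one_lt_top).ne
  set q := p.toReal with hq
  have h0 : 0 ≤ q := ENNReal.toReal_nonneg
  have h1 : q ≤ 1 := by
    rw [hq, ← ENNReal.toReal_one]; exact ENNReal.toReal_mono ENNReal.one_ne_top hp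
  have hp' : p = ENNReal.ofReal q := (ENNReal.ofReal_toReal hpt).symm
  have hsub : (1 : ℝ≥0∞) - p = ENNReal.ofReal (1 - q) := by
    rw [hp', ENNReal.ofReal_sub _ h0, ENNReal.ofReal_one]
  rw [hsub, hp', ← ENNReal.ofReal_pow (by linarith), ← ENNReal.ofReal_mul (pow_nonneg (by linarith) N)]
  exact ENNReal.ofReal_le_ofReal (stmt19_aux_real hN h0 h1)

lemma stmt19_grid (d m : ℕ) (hm0 : 0 < m) (x : EuclideanSpace ℝ (Fin d))
    (hx : ∀ i, x i ∈ Set.Icc (0:ℝ) 1) :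
    ∃ k : Fin d → Fin m, ∀ i, |x i - (((k i : ℕ) : ℝ) + 1/2)/m| ≤ 1/(2*m) := by
  have hmR : (0:ℝ) < m := Nat.cast_pos.2 hm0
  refine ⟨fun i => ⟨min ⌊x i * m⌋₊ (m-1), lt_of_le_of_lt (min_le_right _ _) (by omega)⟩,
    fun i => ?_⟩
  set a := x i with ha
  obtain ⟨h0, h1⟩ := hx i
  set j : ℕ := min ⌊a * m⌋₊ (m-1) with hj
  have low : (j:ℝ) ≤ a * m := by
    calc (j:ℝ) ≤ (⌊a * m⌋₊ : ℝ) := Nat.cast_le.2 (min_le_left _ _)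
      _ ≤ a * m := Nat.floor_le (by positivity)
  have high : a * m ≤ (j:ℝ) + 1 := by
    rcases le_or_gt ⌊a * m⌋₊ (m-1) with hc | hc
    · have : j = ⌊a * m⌋₊ := min_eq_left hc
      rw [this]
      exact (Nat.lt_floor_add_one _).le
    · have hjm : j = m - 1 := min_eq_right hc.le
      have : ((j:ℝ) + 1) = m := by
        rw [hjm]; push_cast [Nat.cast_sub hm0]; ring
      rw [this]
      nlinarith
  have key : |a * m - ((j:ℝ) + 1/2)| ≤ 1/2 := abs_le.2 ⟨by linarith, by linarith⟩
  have heq : a - ((j:ℝ) + 1/2)/m = (a * m - ((j:ℝ) + 1/2))/m := by field_simp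
  rw [heq, abs_div, abs_of_pos hmR, div_le_div_iff₀ hmR (by positivity)]
  calc |a * m - ((j:ℝ) + 1/2)| * (2*m) ≤ (1/2) * (2*m) := by
        nlinarith [abs_nonneg (a * m - ((j:ℝ) + 1/2))]
    _ = 1 * m := by ring

lemma stmt19_meas {d : ℕ} (ρ : Measure (EuclideanSpace ℝ (Fin d))) [SFinite ρ] (h : ℝ) :
    Measurable fun x => ρ (closedBall x h) := by
  have hs : MeasurableSet {p : EuclideanSpace ℝ (Fin d) × EuclideanSpace ℝ (Fin d) | dist p.2 p.1 ≤ h} :=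
    (isClosed_le (continuous_snd.dist continuous_fst) continuous_const).measurableSet
  exact measurable_measure_prodMk_left hs

lemma stmt19_fubini {d N : ℕ} (ρ : Measure (EuclideanSpace ℝ (Fin d))) [IsProbabilityMeasure ρ] (h : ℝ) :
    (Measure.pi fun _ : Fin (N + 1) => ρ)
        {ω | ∀ i : Fin N, ω i.castSucc ∉ closedBall (ω (Fin.last N)) h}
      = ∫⁻ x, ((1 : ℝ≥0∞) - ρ (closedBall x h)) ^ N ∂ρ := by
  set E := EuclideanSpace ℝ (Fin d)
  set T : Set (E × (Fin N → E)) := {p | ∀ i, p.2 i ∉ closedBall p.1 h} with hT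
  have hTm : MeasurableSet T := by
    have : T = ⋂ i : Fin N, {p : E × (Fin N → E) | dist (p.2 i) p.1 ≤ h}ᶜ := by
      ext p; simp [T, mem_closedBall]
    rw [this]
    exact MeasurableSet.iInter fun i =>
      ((isClosed_le (((continuous_apply i).comp continuous_snd).dist continuous_fst)
        continuous_const).measurableSet).compl
  have hpres := measurePreserving_piFinSuccAbove (fun _ : Fin (N+1) => ρ) (Fin.last N)
  have hSpre : {ω : Fin (N+1) → E | ∀ i : Fin N, ω i.castSucc ∉ closedBall (ω (Fin.last N)) h}
      = (MeasurableEquiv.piFinSuccAbove (fun _ : Fin (N+1) => E) (Fin.last N)) ⁻¹' T := by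
    ext ω
    simp [T, MeasurableEquiv.piFinSuccAbove, Fin.removeNth, Fin.succAbove_last, Fin.init]
  rw [hSpre, hpres.measure_preimage_equiv, Measure.prod_apply hTm]
  have hfib : ∀ x : E, (Prod.mk x ⁻¹' T) = Set.pi Set.univ (fun _ : Fin N => (closedBall x h)ᶜ) := by
    intro x; ext y; simp [T, Set.mem_pi]
  simp_rw [hfib, Measure.pi_pi]
  have hcompl : ∀ x : E, ρ (closedBall x h)ᶜ = 1 - ρ (closedBall x h) := fun x =>
    prob_compl_eq_one_sub measurableSet_closedBall
  simp_rw [hcompl, Finset.prod_const, Finset.card_univ, Fintype.card_fin]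
  rfl

lemma stmt19_int_eq {d : ℕ} (N : ℕ) (ρ : Measure (EuclideanSpace ℝ (Fin d)))
    [IsProbabilityMeasure ρ] (h : ℝ) :
    ∫ x, (1 - (ρ (closedBall x h)).toReal) ^ N ∂ρ
      = (∫⁻ x, ((1:ℝ≥0∞) - ρ (closedBall x h)) ^ N ∂ρ).toReal := by
  have hmeas : Measurable fun x => ((1:ℝ≥0∞) - ρ (closedBall x h)) ^ N :=
    ((stmt19_meas ρ h).const_sub 1).pow_const N
  rw [← integral_toReal hmeas.aemeasurable (ae_of_all _ fun x =>
    (ENNReal.pow_lt_top (lt_of_le_of_lt tsub_le_self ENNReal.one_lt_top)))]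
  refine integral_congr_ae (ae_of_all _ fun x => ?_)
  simp only [ENNReal.toReal_pow, ENNReal.toReal_sub_of_le prob_le_one ENNReal.one_ne_top,
    ENNReal.toReal_one]

/-- `X := ω (Fin.last N)` is the independent test point and `ω i.castSucc`,
`i : Fin N`, are the samples; all are i.i.d. with law `ρX`. -/
theorem stmt19 (d : ℕ) (hd : 0 < d) :
    ∃ c > 0, ∀ K : Set (EuclideanSpace ℝ (Fin d)), IsCompact K →
      (∀ x ∈ K, ∀ i, x i ∈ Set.Icc (0 : ℝ) 1) →
      ∀ ρX : Measure (EuclideanSpace ℝ (Fin d)), IsProbabilityMeasure ρX → ρX K = 1 →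
      ∀ (N : ℕ) (h : ℝ), 0 < N → 0 < h →
      (((Measure.pi fun _ : Fin (N + 1) => ρX)
            {ω | ∀ i : Fin N, ω i.castSucc ∉ closedBall (ω (Fin.last N)) h}).toReal
          ≤ ∫ x, (1 - (ρX (closedBall x h)).toReal) ^ N ∂ρX)
      ∧ ∫ x, (1 - (ρX (closedBall x h)).toReal) ^ N ∂ρX ≤ c / (N * h ^ d) := by
  have hdR : (0:ℝ) < d := Nat.cast_pos.2 hd
  have hsd : 0 < Real.sqrt d := Real.sqrt_pos.2 hdR
  refine ⟨(2 * Real.sqrt d) ^ d, pow_pos (by linarith) d, ?_⟩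
  intro K hK hKcube ρ hρ hρK N h hN hh
  haveI := hρ
  set f : EuclideanSpace ℝ (Fin d) → ℝ≥0∞ :=
    fun x => ((1:ℝ≥0∞) - ρ (closedBall x h)) ^ N with hf
  have hInt := stmt19_int_eq N ρ h
  constructor
  · rw [hInt, stmt19_fubini ρ h]
  · rw [hInt]
    have hcd : (0:ℝ) ≤ (2 * Real.sqrt d) ^ d / (N * h ^ d) := by positivity
    refine ENNReal.toReal_le_of_le_ofReal hcd ?_
    have hKc : ρ Kᶜ = 0 := by
      rw [prob_compl_eq_one_sub hK.measurableSet, hρK, tsub_self]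
    have hsplit : ∫⁻ x, f x ∂ρ = ∫⁻ x in K, f x ∂ρ := by
      have := lintegral_add_compl f hK.measurableSet (μ := ρ)
      rw [setLIntegral_measure_zero _ _ hKc, add_zero] at this
      exact this.symm
    rw [hsplit]
    rcases le_or_gt h (Real.sqrt d) with hcase | hcase
    · -- covering case
      set m := ⌈Real.sqrt d / h⌉₊ with hm
      have hm0 : 0 < m := Nat.ceil_pos.2 (by positivity)
      have hmR : (0:ℝ) < m := Nat.cast_pos.2 hm0
      set z : (Fin d → Fin m) → EuclideanSpace ℝ (Fin d) :=
        fun k => WithLp.toLp 2 (fun i => (((k i : ℕ):ℝ) + 1/2)/m) with hz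
      have hcover : K ⊆ ⋃ k : Fin d → Fin m, closedBall (z k) (h/2) := by
        intro x hx
        obtain ⟨k, hk⟩ := stmt19_grid d m hm0 x (hKcube x hx)
        refine Set.mem_iUnion.2 ⟨k, ?_⟩
        rw [mem_closedBall, EuclideanSpace.dist_eq]
        have hsum : ∑ i, dist (x i) (z k i) ^ 2 ≤ d * (1/(2*(m:ℝ)))^2 := by
          calc ∑ i, dist (x i) (z k i) ^ 2 ≤ ∑ _i : Fin d, (1/(2*(m:ℝ)))^2 :=
                Finset.sum_le_sum fun i _ => by
                  rw [Real.dist_eq]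
                  exact pow_le_pow_left₀ (abs_nonneg _) (hk i) 2
            _ = d * (1/(2*(m:ℝ)))^2 := by
                rw [Finset.sum_const, Finset.card_univ, Fintype.card_fin, nsmul_eq_mul]
        have hsqrt := Real.sqrt_le_sqrt hsum
        refine hsqrt.trans ?_
        rw [Real.sqrt_mul (by positivity), Real.sqrt_sq (by positivity)]
        have hmle : Real.sqrt d ≤ m * h := by
          have hceil := Nat.le_ceil (Real.sqrt d / h)
          calc Real.sqrt d = (Real.sqrt d / h) * h := by field_simp
            _ ≤ m * h := mul_le_mul_of_nonneg_right hceil hh.le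
        rw [mul_one_div, div_le_div_iff₀ (by positivity) (by norm_num : (0:ℝ) < 2)]
        nlinarith
      calc ∫⁻ x in K, f x ∂ρ
          ≤ ∫⁻ x in ⋃ k : Fin d → Fin m, closedBall (z k) (h/2), f x ∂ρ :=
            lintegral_mono_set hcover
        _ ≤ ∑' k : Fin d → Fin m, ∫⁻ x in closedBall (z k) (h/2), f x ∂ρ :=
            lintegral_iUnion_le _ _
        _ = ∑ k : Fin d → Fin m, ∫⁻ x in closedBall (z k) (h/2), f x ∂ρ := tsum_fintype _
        _ ≤ ∑ _k : Fin d → Fin m, ENNReal.ofReal (1/N) := by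
            refine Finset.sum_le_sum fun k _ => ?_
            set p := ρ (closedBall (z k) (h/2)) with hp
            have hsub : ∀ x ∈ closedBall (z k) (h/2), closedBall (z k) (h/2) ⊆ closedBall x h := by
              intro x hx y hy
              rw [mem_closedBall] at *
              calc dist y x ≤ dist y (z k) + dist (z k) x := dist_triangle _ _ _
                _ ≤ h/2 + h/2 := add_le_add hy (by rw [dist_comm]; exact hx)
                _ = h := by ring
            have hfb : ∀ x ∈ closedBall (z k) (h/2), f x ≤ (1 - p)^N := fun x hx =>
              pow_le_pow_left' (tsub_le_tsub_left (measure_mono (hsub x hx)) 1) N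
            calc ∫⁻ x in closedBall (z k) (h/2), f x ∂ρ
                ≤ ∫⁻ _x in closedBall (z k) (h/2), (1-p)^N ∂ρ :=
                  setLIntegral_mono measurable_const hfb
              _ = (1-p)^N * p := by rw [setLIntegral_const]
              _ ≤ ENNReal.ofReal (1/N) := stmt19_aux_enn hN prob_le_one
        _ = (Fintype.card (Fin d → Fin m)) * ENNReal.ofReal (1/N) := by
            rw [Finset.sum_const, Finset.card_univ, nsmul_eq_mul]
        _ ≤ ENNReal.ofReal ((2 * Real.sqrt d) ^ d / (N * h ^ d)) := by
            rw [Fintype.card_fun, Fintype.card_fin, Fintype.card_fin]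
            rw [show ((m ^ d : ℕ) : ℝ≥0∞) = ENNReal.ofReal ((m:ℝ)^d) by
              rw [← ENNReal.ofReal_natCast]; norm_num]
            rw [← ENNReal.ofReal_mul (by positivity)]
            refine ENNReal.ofReal_le_ofReal ?_
            have h1' : (1:ℝ) ≤ Real.sqrt d / h := (one_le_div hh).2 hcase
            have hceil := (Nat.ceil_lt_add_one (by positivity : (0:ℝ) ≤ Real.sqrt d / h)).le
            have hmle2 : (m:ℝ) ≤ 2 * Real.sqrt d / h := by
              rw [hm]
              have : Real.sqrt d / h + 1 ≤ 2 * Real.sqrt d / h := by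
                rw [two_mul, add_div]; linarith
              linarith
            have hpow : (m:ℝ)^d ≤ (2 * Real.sqrt d / h)^d :=
              pow_le_pow_left₀ (by positivity) hmle2 d
            calc (m:ℝ)^d * (1/N) ≤ (2 * Real.sqrt d / h)^d * (1/N) :=
                  mul_le_mul_of_nonneg_right hpow (by positivity)
              _ = (2 * Real.sqrt d) ^ d / (N * h ^ d) := by
                  rw [div_pow]; field_simp
    · -- large h case: integrand vanishes on K
      have hzero : ∀ x ∈ K, f x = 0 := by
        intro x hx
        have hsub : K ⊆ closedBall x h := by
          intro y hy
          rw [mem_closedBall, EuclideanSpace.dist_eq]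
        -- each coordinate difference at most 1
          have hsum : ∑ i, dist (y i) (x i) ^ 2 ≤ (d:ℝ) := by
            calc ∑ i, dist (y i) (x i) ^ 2 ≤ ∑ _i : Fin d, (1:ℝ) :=
                  Finset.sum_le_sum fun i _ => by
                    obtain ⟨hy0, hy1⟩ := hKcube y hy i
                    obtain ⟨hx0, hx1⟩ := hKcube x hx i
                    rw [Real.dist_eq]
                    have habs : |y i - x i| ≤ 1 := abs_le.2 ⟨by linarith, by linarith⟩
                    calc |y i - x i| ^ 2 ≤ 1^2 := pow_le_pow_left₀ (abs_nonneg _) habs 2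
                      _ = 1 := one_pow 2
              _ = d := by simp
          calc Real.sqrt (∑ i, dist (y i) (x i) ^ 2) ≤ Real.sqrt d := Real.sqrt_le_sqrt hsum
            _ ≤ h := hcase.le
        have hone : ρ (closedBall x h) = 1 :=
          le_antisymm prob_le_one (by rw [← hρK]; exact measure_mono hsub)
        rw [hf]
        simp only [hone, tsub_self]
        exact zero_pow hN.ne'
      have : ∫⁻ x in K, f x ∂ρ = 0 := by
        rw [setLIntegral_congr_fun hK.measurableSet hzero, lintegral_zero]
      rw [this]
      exact zero_le
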